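/- Fix α ∈ (0,1) and define g(x) = 2(1 - α - α x²)·(tanh x)/x + 2α for x > 0. Then g is strictly decreasing on (0,∞), g(x) → 2 as x → 0⁺, and g(x) → -∞ as x → ∞. Consequently, g has a unique positive zero. -/

import Mathlib

noncomputable def g (α x : ℝ) : ℝ := 2 * (1 - α - α * x ^ 2) * Real.tanh x / x + 2 * α

lemma tanh_lt_one' (x : ℝ) : Real.tanh x < 1 := by
  rw [Real.tanh_eq_sinh_div_cosh, div_lt_one (Real.cosh_pos x)]
  nlinarith [Real.cosh_sub_sinh x, Real.exp_pos (-x)]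

lemma tanh_pos' {x : ℝ} (hx : 0 < x) : 0 < Real.tanh x := by
  rw [Real.tanh_eq_sinh_div_cosh]
  exact div_pos (Real.sinh_pos_iff.2 hx) (Real.cosh_pos x)

lemma tanh_strictMono' : StrictMono Real.tanh := by
  intro x y hxy
  rw [Real.tanh_eq_sinh_div_cosh, Real.tanh_eq_sinh_div_cosh,
    div_lt_div_iff₀ (Real.cosh_pos x) (Real.cosh_pos y)]
  have h1 := Real.cosh_add_sinh x
  have h2 := Real.cosh_sub_sinh x
  have h3 := Real.cosh_add_sinh y
  have h4 := Real.cosh_sub_sinh y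
  nlinarith [Real.exp_lt_exp.2 hxy, Real.exp_lt_exp.2 (neg_lt_neg hxy),
    Real.exp_pos x, Real.exp_pos (-x), Real.exp_pos y, Real.exp_pos (-y)]

lemma one_sub_tanh_sq (x : ℝ) : 1 - Real.tanh x ^ 2 = 1 / Real.cosh x ^ 2 := by
  have hc := (Real.cosh_pos x).ne'
  rw [Real.tanh_eq_sinh_div_cosh, div_pow]
  field_simp
  linarith [Real.cosh_sq_sub_sinh_sq x]

/-- Key inequality: tanh x > x (1 - tanh² x) for x > 0. -/
lemma key_ineq {x : ℝ} (hx : 0 < x) : x * (1 - Real.tanh x ^ 2) < Real.tanh x := by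
  rw [one_sub_tanh_sq, Real.tanh_eq_sinh_div_cosh]
  have hc := Real.cosh_pos x
  rw [mul_one_div, div_lt_div_iff₀ (by positivity) hc, sq]
  have h1 : x < Real.sinh x := Real.self_lt_sinh_iff.2 hx
  have h2 : 1 ≤ Real.cosh x := Real.one_le_cosh x
  have h3 : x * Real.cosh x < Real.sinh x * Real.cosh x := mul_lt_mul_of_pos_right h1 hc
  have h4 : 0 < Real.sinh x * Real.cosh x := mul_pos (by linarith) hc
  nlinarith

lemma continuous_tanh' : Continuous Real.tanh := by
  have h : Real.tanh = fun y => Real.sinh y / Real.cosh y := funext Real.tanh_eq_sinh_div_cosh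
  rw [h]
  exact Real.continuous_sinh.div Real.continuous_cosh fun x => (Real.cosh_pos x).ne'

lemma hasDerivAt_tanh' (x : ℝ) :
    HasDerivAt Real.tanh (1 - Real.tanh x ^ 2) x := by
  have hd := (Real.hasDerivAt_sinh x).div (Real.hasDerivAt_cosh x) (Real.cosh_pos x).ne'
  have hval : (Real.cosh x * Real.cosh x - Real.sinh x * Real.sinh x) / Real.cosh x ^ 2
      = 1 - Real.tanh x ^ 2 := by
    rw [one_sub_tanh_sq]
    have h1 := Real.cosh_sq_sub_sinh_sq x
    have hc := (Real.cosh_pos x).ne'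
    field_simp
    nlinarith
  rw [hval] at hd
  exact hd.congr_of_eventuallyEq
    (Filter.Eventually.of_forall fun y => Real.tanh_eq_sinh_div_cosh y)

lemma hasDerivAt_tanh_div {x : ℝ} (hx : 0 < x) :
    HasDerivAt (fun y => Real.tanh y / y)
      (((1 - Real.tanh x ^ 2) * x - Real.tanh x) / x ^ 2) x := by
  exact ((hasDerivAt_tanh' x).div (hasDerivAt_id' x) hx.ne').congr_deriv (by ring)

lemma tanh_div_strictAnti : StrictAntiOn (fun y => Real.tanh y / y) (Set.Ioi 0) := by
  apply strictAntiOn_of_deriv_neg (convex_Ioi 0)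
  · exact (continuous_tanh'.continuousOn).div continuousOn_id (fun x hx => ne_of_gt hx)
  · intro x hx
    rw [interior_Ioi] at hx
    rw [(hasDerivAt_tanh_div hx).deriv]
    apply div_neg_of_neg_of_pos _ (pow_pos hx 2)
    have := key_ineq hx
    nlinarith

lemma g_eq (α : ℝ) {x : ℝ} (hx : x ≠ 0) :
    g α x = 2 * (1 - α) * (Real.tanh x / x) + 2 * α * (1 - x * Real.tanh x) := by
  unfold g
  field_simp
  ring

lemma g_strictAnti (α : ℝ) (hα : 0 < α ∧ α < 1) : StrictAntiOn (g α) (Set.Ioi 0) := by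
  intro x hx y hy hxy
  rw [Set.mem_Ioi] at hx hy
  rw [g_eq α hx.ne', g_eq α hy.ne']
  have h1 : Real.tanh y / y < Real.tanh x / x := tanh_div_strictAnti hx hy hxy
  have h2 : x * Real.tanh x < y * Real.tanh y := by
    have ht := tanh_strictMono' hxy
    have := tanh_pos' hx
    nlinarith
  have c1 : 0 < 2 * (1 - α) := by linarith [hα.2]
  have c2 : 0 < 2 * α := by linarith [hα.1]
  nlinarith

lemma g_tendsto_zero (α : ℝ) :
    Filter.Tendsto (g α) (nhdsWithin 0 (Set.Ioi 0)) (nhds 2) := by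
  have hslope : Filter.Tendsto (fun y => Real.tanh y / y) (nhdsWithin 0 (Set.Ioi 0)) (nhds 1) := by
    have h := (hasDerivAt_tanh' 0)
    rw [hasDerivAt_iff_tendsto_slope] at h
    have h2 : Filter.Tendsto (slope Real.tanh 0) (nhdsWithin 0 (Set.Ioi 0)) (nhds (1 - Real.tanh 0 ^ 2)) :=
      h.mono_left (nhdsWithin_mono 0 (fun y hy => ne_of_gt hy))
    have : (1 - Real.tanh 0 ^ 2) = 1 := by rw [Real.tanh_zero]; ring
    rw [this] at h2
    refine h2.congr (fun y => ?_)
    simp [slope, Real.tanh_zero]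
    ring
  have hcoef : Filter.Tendsto (fun y : ℝ => 2 * (1 - α - α * y ^ 2)) (nhdsWithin 0 (Set.Ioi 0))
      (nhds (2 * (1 - α))) := by
    have : Filter.Tendsto (fun y : ℝ => 2 * (1 - α - α * y ^ 2)) (nhds 0) (nhds (2 * (1 - α - α * 0 ^ 2))) := by
      apply Continuous.tendsto
      continuity
    simpa using this.mono_left nhdsWithin_le_nhds
  have hmain : Filter.Tendsto (fun y => 2 * (1 - α - α * y ^ 2) * (Real.tanh y / y) + 2 * α)
      (nhdsWithin 0 (Set.Ioi 0)) (nhds (2 * (1 - α) * 1 + 2 * α)) :=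
    (hcoef.mul hslope).add tendsto_const_nhds
  have : 2 * (1 - α) * 1 + 2 * α = 2 := by ring
  rw [this] at hmain
  refine hmain.congr (fun y => ?_)
  unfold g
  ring

lemma g_tendsto_atBot (α : ℝ) (hα : 0 < α ∧ α < 1) :
    Filter.Tendsto (g α) Filter.atTop Filter.atBot := by
  have ht1 : 0 < Real.tanh 1 := tanh_pos' one_pos
  have hlin : Filter.Tendsto (fun x : ℝ => 2 - 2 * α * Real.tanh 1 * x) Filter.atTop Filter.atBot := by
    have hmul : Filter.Tendsto (fun x : ℝ => 2 * α * Real.tanh 1 * x) Filter.atTop Filter.atTop :=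
      Filter.Tendsto.const_mul_atTop (by nlinarith [hα.1]) Filter.tendsto_id
    have hneg := Filter.tendsto_neg_atTop_atBot.comp hmul
    simp only [sub_eq_add_neg]
    exact Filter.tendsto_atBot_add_const_left _ _ hneg
  apply Filter.tendsto_atBot_mono' Filter.atTop _ hlin
  filter_upwards [Filter.eventually_ge_atTop 1] with x hx
  have hx0 : 0 < x := lt_of_lt_of_le one_pos hx
  rw [g_eq α hx0.ne']
  have h1 : Real.tanh x / x ≤ 1 := by
    rw [div_le_one hx0]
    exact (tanh_lt_one' x).le.trans hx
  have h2 : x * Real.tanh 1 ≤ x * Real.tanh x := by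
    apply mul_le_mul_of_nonneg_left _ hx0.le
    rcases eq_or_lt_of_le hx with h | h
    · rw [h]
    · exact (tanh_strictMono' h).le
  have c1 : 0 < 2 * (1 - α) := by linarith [hα.2]
  nlinarith [hα.1]

theorem stmt_10 (α : ℝ) (hα : 0 < α ∧ α < 1) :
    StrictAntiOn (g α) (Set.Ioi 0) ∧
    Filter.Tendsto (g α) (nhdsWithin 0 (Set.Ioi 0)) (nhds 2) ∧
    Filter.Tendsto (g α) Filter.atTop Filter.atBot ∧
    (∃! x : ℝ, 0 < x ∧ g α x = 0) := by
  have hanti := g_strictAnti α hα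
  have h0 := g_tendsto_zero α
  have hbot := g_tendsto_atBot α hα
  refine ⟨hanti, h0, hbot, ?_⟩
  -- Existence of a point with positive value
  have hcont : ContinuousOn (g α) (Set.Ioi 0) := by
    unfold g
    apply ContinuousOn.add _ continuousOn_const
    exact ((continuousOn_const.mul (Continuous.continuousOn (by continuity))).mul
      continuous_tanh'.continuousOn).div continuousOn_id (fun x hx => ne_of_gt hx)
  obtain ⟨a, ha1, ha2⟩ : ∃ a, 1 < g α a ∧ a ∈ Set.Ioi (0:ℝ) := by
    have := (h0.eventually (eventually_gt_nhds (by norm_num : (1:ℝ) < 2))).and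
      self_mem_nhdsWithin
    exact this.exists
  obtain ⟨b, hb1, hb2⟩ : ∃ b, g α b < 0 ∧ a + 1 ≤ b := by
    have h1 := hbot.eventually (Filter.eventually_lt_atBot (0:ℝ))
    have h2 := Filter.eventually_ge_atTop (a + 1)
    exact (h1.and h2).exists
  have ha0 : 0 < a := ha2
  have hab : a ≤ b := by linarith
  have hb0 : 0 < b := by linarith
  have hsub : Set.Icc a b ⊆ Set.Ioi 0 := fun y hy => lt_of_lt_of_le ha0 hy.1
  have hivt := intermediate_value_Icc' hab (hcont.mono hsub)
  have h0mem : (0:ℝ) ∈ Set.Icc (g α b) (g α a) := ⟨hb1.le, by linarith⟩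
  obtain ⟨c, hc, hgc⟩ := hivt h0mem
  refine ⟨c, ⟨lt_of_lt_of_le ha0 hc.1, hgc⟩, ?_⟩
  intro y ⟨hy0, hgy⟩
  have hc0 : (0:ℝ) < c := lt_of_lt_of_le ha0 hc.1
  by_contra hne
  rcases lt_or_gt_of_ne hne with h | h
  · have := hanti (Set.mem_Ioi.2 hy0) (Set.mem_Ioi.2 hc0) h
    rw [hgy, hgc] at this; exact lt_irrefl 0 this
  · have := hanti (Set.mem_Ioi.2 hc0) (Set.mem_Ioi.2 hy0) h
    rw [hgy, hgc] at this; exact lt_irrefl 0 this
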